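/- For all positive integers d and n, one has n·disp_C(n,d) = dens(n,d) = n·V(φ(n)); that is, the minimal spherical cap dispersion times n equals the minimal spherical covering density, which in turn equals n times the normalized volume of a cap of geodesic radius equal to the minimal geodesic covering radius. -/

import Mathlib

open scoped Real InnerProductSpace
open MeasureTheory Filter

noncomputable section

/-- The `d`-dimensional unit sphere `S^d`, as a subtype of `ℝ^{d+1}`. -/
abbrev Sph (d : ℕ) := Metric.sphere (0 : EuclideanSpace ℝ (Fin (d + 1))) 1

/-- Geodesic distance `ρ(x,y) = arccos⟨x,y⟩` on the sphere. -/
def geoDist {d : ℕ} (x y : Sph d) : ℝ :=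
  Real.arccos ⟪(x : EuclideanSpace ℝ (Fin (d + 1))), (y : EuclideanSpace ℝ (Fin (d + 1)))⟫_ℝ

/-- Spherical cap (geodesic ball) with center `x` and geodesic radius `φ`. -/
def cap {d : ℕ} (x : Sph d) (φ : ℝ) : Set (Sph d) :=
  {y : Sph d | geoDist x y ≤ φ}

/-- The normalized Lebesgue (surface) measure `σ` on the sphere `S^d`. -/
def sphMeasure (d : ℕ) : Measure (Sph d) :=
  ((volume : Measure (EuclideanSpace ℝ (Fin (d + 1)))).toSphere Set.univ)⁻¹ •
    (volume : Measure (EuclideanSpace ℝ (Fin (d + 1)))).toSphere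

/-- Spherical cap dispersion `disp_C(P)` of a point set `P ⊆ S^d`:
the supremum of `σ(C)` over caps `C` avoiding `P`. -/
def capDisp {d : ℕ} (P : Set (Sph d)) : ℝ :=
  sSup {v : ℝ | ∃ x : Sph d, ∃ φ ∈ Set.Icc (0 : ℝ) π,
    cap x φ ∩ P = ∅ ∧ v = (sphMeasure d (cap x φ)).toReal}

/-- Minimal spherical cap dispersion `disp_C(n, d)`:
the infimum of `disp_C({x_1, …, x_n})` over `x_1, …, x_n ∈ S^d`. -/
def minCapDisp (d n : ℕ) : ℝ :=
  sInf {v : ℝ | ∃ x : Fin n → Sph d, v = capDisp (Set.range x)}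

/-- Normalized volume `V(φ)` of a spherical cap of geodesic radius `φ`
(centered at the first standard basis vector). -/
def capVol (d : ℕ) (φ : ℝ) : ℝ :=
  (sphMeasure d (cap (⟨EuclideanSpace.single 0 1, by
    simp [EuclideanSpace.norm_single]⟩ : Sph d) φ)).toReal

/-- Minimal geodesic covering radius `φ(n)` of `S^d` with `n` caps. -/
def covRad (d n : ℕ) : ℝ :=
  sInf {φ : ℝ | 0 < φ ∧ ∃ x : Fin n → Sph d, (⋃ i, cap (x i) φ) = Set.univ}

/-- Minimal spherical covering density `dens(n, d)`:
the infimal total normalized volume of `n` equal caps covering `S^d`. -/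
def minDens (d n : ℕ) : ℝ :=
  sInf {s : ℝ | ∃ φ ∈ Set.Ioc (0 : ℝ) π, ∃ x : Fin n → Sph d,
    (⋃ i, cap (x i) φ) = Set.univ ∧
    s = ∑ i : Fin n, (sphMeasure d (cap (x i) φ)).toReal}

open Metric Set Pointwise Topology

namespace SphAux

variable {d : ℕ}

abbrev ESp (d : ℕ) := EuclideanSpace ℝ (Fin (d + 1))

def e0 (d : ℕ) : Sph d := ⟨EuclideanSpace.single 0 1, by
  simp [EuclideanSpace.norm_single]⟩

lemma isClosed_cap (x : Sph d) (φ : ℝ) : IsClosed (cap x φ) :=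
  isClosed_le ((Real.continuous_arccos).comp
    (Continuous.inner continuous_const continuous_subtype_val)) continuous_const

lemma measurableSet_cap (x : Sph d) (φ : ℝ) : MeasurableSet (cap x φ) :=
  (isClosed_cap x φ).measurableSet

lemma cap_mono (x : Sph d) {φ ψ : ℝ} (h : φ ≤ ψ) : cap x φ ⊆ cap x ψ :=
  fun y hy => le_trans hy h

lemma mem_cap_comm {x y : Sph d} {φ : ℝ} : y ∈ cap x φ ↔ x ∈ cap y φ := by
  simp only [cap, Set.mem_setOf_eq, geoDist, real_inner_comm]

/-- image of a set under a linear isometry has equal volume -/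
lemma volume_image_lie (f : ESp d ≃ₗᵢ[ℝ] ESp d) (T : Set (ESp d)) :
    volume (f '' T) = volume T := by
  set fm : ESp d ≃ᵐ ESp d := f.toHomeomorph.toMeasurableEquiv with hfm
  have h1 : f '' T = fm.symm ⁻¹' T := by
    ext z
    simp [hfm, Set.mem_image, Equiv.symm_apply_eq]
    constructor
    · rintro ⟨a, ha, rfl⟩; simpa using ha
    · intro h; exact ⟨f.symm z, h, by simp⟩
  have h2 : Measure.map fm.symm volume = volume := by
    have := (f.symm.measurePreserving).map_eq
    exact this
  rw [h1, ← MeasurableEquiv.map_apply fm.symm, h2]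

lemma toSphere_cap_eq (x : Sph d) (φ : ℝ) :
    (volume : Measure (ESp d)).toSphere (cap x φ) =
      (volume : Measure (ESp d)).toSphere (cap (e0 d) φ) := by
  classical
  set f : ESp d ≃ₗᵢ[ℝ] ESp d := Submodule.reflection (ℝ ∙ ((e0 d : ESp d) - (x : ESp d)))ᗮ with hf
  have hnorm : ‖(e0 d : ESp d)‖ = ‖(x : ESp d)‖ := by
    rw [(mem_sphere_zero_iff_norm).1 (e0 d).2, (mem_sphere_zero_iff_norm).1 x.2]
  have hfe0 : f (e0 d : ESp d) = (x : ESp d) := Submodule.reflection_sub hnorm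
  have himg : ((↑) '' (cap x φ) : Set (ESp d)) = f '' ((↑) '' (cap (e0 d) φ)) := by
    ext z
    simp only [Set.mem_image, Set.image_image]
    constructor
    · rintro ⟨y, hy, rfl⟩
      have hnz : ‖f.symm (y : ESp d)‖ = 1 := by
        rw [f.symm.norm_map, (mem_sphere_zero_iff_norm).1 y.2]
      refine ⟨⟨f.symm (y : ESp d), mem_sphere_zero_iff_norm.2 hnz⟩, ?_, by simp⟩
      have : ⟪(e0 d : ESp d), f.symm (y : ESp d)⟫_ℝ = ⟪(x : ESp d), (y : ESp d)⟫_ℝ := by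
        rw [← hfe0, ← f.inner_map_map (e0 d : ESp d) (f.symm (y : ESp d)), f.apply_symm_apply]
      show Real.arccos ⟪(e0 d : ESp d), f.symm (y : ESp d)⟫_ℝ ≤ φ
      rw [this]; exact hy
    · rintro ⟨a, ha, rfl⟩
      have hnz : ‖f (a : ESp d)‖ = 1 := by
        rw [f.norm_map, (mem_sphere_zero_iff_norm).1 a.2]
      refine ⟨⟨f (a : ESp d), mem_sphere_zero_iff_norm.2 hnz⟩, ?_, rfl⟩
      have : ⟪(x : ESp d), f (a : ESp d)⟫_ℝ = ⟪(e0 d : ESp d), (a : ESp d)⟫_ℝ := by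
        rw [← hfe0, f.inner_map_map]
      show Real.arccos ⟪(x : ESp d), f (a : ESp d)⟫_ℝ ≤ φ
      rw [this]; exact ha
  rw [Measure.toSphere_apply' _ (measurableSet_cap x φ),
    Measure.toSphere_apply' _ (measurableSet_cap (e0 d) φ), himg]
  congr 1
  have hsm : Set.Ioo (0:ℝ) 1 • (f '' ((↑) '' (cap (e0 d) φ)))
      = f '' (Set.Ioo (0:ℝ) 1 • ((↑) '' (cap (e0 d) φ))) := by
    ext z
    simp only [Set.mem_smul, Set.mem_image]
    constructor
    · rintro ⟨r, hr, w, ⟨a, ha, rfl⟩, rfl⟩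
      exact ⟨r • a, ⟨r, hr, a, ha, rfl⟩, by simp⟩
    · rintro ⟨w, ⟨r, hr, a, ha, rfl⟩, rfl⟩
      exact ⟨r, hr, f a, ⟨a, ha, rfl⟩, by simp⟩
  rw [hsm, volume_image_lie]


lemma fiber_null (c q : ℝ) (hq : 0 < q) :
    volume {t : ℝ | t = c * Real.sqrt (t ^ 2 + q)} = 0 := by
  have key : ∀ t : ℝ, t = c * Real.sqrt (t ^ 2 + q) → t ^ 2 = c ^ 2 * (t ^ 2 + q) := by
    intro t ht
    have h0 : (0:ℝ) ≤ t ^ 2 + q := by positivity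
    calc t ^ 2 = (c * Real.sqrt (t ^ 2 + q)) ^ 2 := by rw [← ht]
    _ = c ^ 2 * (t ^ 2 + q) := by rw [mul_pow, Real.sq_sqrt h0]
  by_cases hc : c ^ 2 = 1
  · have : {t : ℝ | t = c * Real.sqrt (t ^ 2 + q)} = ∅ := by
      ext t
      simp only [Set.mem_setOf_eq, Set.mem_empty_iff_false, iff_false]
      intro ht
      have := key t ht
      rw [hc, one_mul] at this
      linarith
    rw [this, measure_empty]
  · set b := c ^ 2 * q / (1 - c ^ 2) with hb
    have hsub : {t : ℝ | t = c * Real.sqrt (t ^ 2 + q)} ⊆ {Real.sqrt b, -Real.sqrt b} := by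
      intro t ht
      have h2 := key t ht
      have hne : 1 - c ^ 2 ≠ 0 := fun h => hc (by linarith)
      have htb : t ^ 2 = b := by
        rw [hb, eq_div_iff hne]; ring_nf; ring_nf at h2; linarith
      have habs : Real.sqrt b = |t| := by rw [← htb, Real.sqrt_sq_eq_abs]
      rcases abs_cases t with ⟨h, _⟩ | ⟨h, _⟩
      · left; show t = Real.sqrt b; rw [habs, h]
      · right; show t = -Real.sqrt b; rw [habs, h]; ring
    exact measure_mono_null hsub
      (Set.Countable.measure_zero ((Set.countable_singleton _).insert _) _)

lemma volume_pi_slice_zero (hd : 1 ≤ d) (c : ℝ) :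
    volume {w : (Fin d → ℝ) × ℝ | w.2 = c * Real.sqrt (w.2 ^ 2 + ∑ i, w.1 i ^ 2)} = 0 := by
  have hS3m : MeasurableSet {w : (Fin d → ℝ) × ℝ |
      w.2 = c * Real.sqrt (w.2 ^ 2 + ∑ i, w.1 i ^ 2)} := by
    apply (isClosed_eq (continuous_snd) _).measurableSet
    exact continuous_const.mul (Real.continuous_sqrt.comp
      ((continuous_snd.pow 2).add
        (continuous_finset_sum _ fun i _ => ((continuous_apply i).comp continuous_fst).pow 2)))
  have hz : volume {w : Fin d → ℝ | ∑ i, w i ^ 2 = 0} = 0 := by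
    have h1 : {w : Fin d → ℝ | ∑ i, w i ^ 2 = 0} = Set.pi Set.univ (fun _ => ({0} : Set ℝ)) := by
      ext w
      simp only [Set.mem_setOf_eq, Set.mem_pi, Set.mem_univ, Set.mem_singleton_iff, true_implies]
      rw [Finset.sum_eq_zero_iff_of_nonneg (fun i _ => sq_nonneg _)]
      constructor
      · intro h i; have := h i (Finset.mem_univ i); exact pow_eq_zero_iff (by norm_num) |>.1 this
      · intro h i _; rw [h i]; ring
    rw [h1, volume_pi_pi]
    exact Finset.prod_eq_zero (Finset.mem_univ (⟨0, hd⟩ : Fin d)) Real.volume_singleton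
  rw [show (volume : Measure ((Fin d → ℝ) × ℝ)) = (volume : Measure (Fin d → ℝ)).prod volume
    from rfl, Measure.measure_prod_null hS3m]
  filter_upwards [measure_eq_zero_iff_ae_notMem.1 hz] with w hw
  have hq : 0 < ∑ i, w i ^ 2 :=
    lt_of_le_of_ne (Finset.sum_nonneg fun i _ => sq_nonneg _) (Ne.symm hw)
  simpa using fiber_null c _ hq

lemma volume_cone_zero (hd : 1 ≤ d) (c : ℝ) :
    volume {z : ESp d | ⟪(e0 d : ESp d), z⟫_ℝ = c * ‖z‖} = 0 := by
  set S1 : Set (Fin (d + 1) → ℝ) := {f | f 0 = c * Real.sqrt (∑ i, f i ^ 2)} with hS1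
  have hS1m : MeasurableSet S1 := by
    apply (isClosed_eq (continuous_apply 0) _).measurableSet
    exact continuous_const.mul (Real.continuous_sqrt.comp
      (continuous_finset_sum _ fun i _ => (continuous_apply i).pow 2))
  have hpre : {z : ESp d | ⟪(e0 d : ESp d), z⟫_ℝ = c * ‖z‖} =
      (MeasurableEquiv.toLp 2 (Fin (d + 1) → ℝ)).symm ⁻¹' S1 := by
    ext z
    have h1 : ⟪(e0 d : ESp d), z⟫_ℝ = z 0 := by
      simp [e0, EuclideanSpace.inner_single_left]
    have h2 : ‖z‖ = Real.sqrt (∑ i, z i ^ 2) := by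
      rw [EuclideanSpace.norm_eq]
      congr 1
      exact Finset.sum_congr rfl fun i _ => by rw [Real.norm_eq_abs, sq_abs]
    simp only [Set.mem_setOf_eq, Set.mem_preimage, hS1, h1, h2]
    rfl
  rw [hpre, (EuclideanSpace.volume_preserving_symm_measurableEquiv_toLp
    (Fin (d + 1))).measure_preimage hS1m.nullMeasurableSet]
  set π2 := MeasurableEquiv.piFinSuccAbove (fun _ : Fin (d + 1) => ℝ) 0 with hπ2
  set S2 : Set (ℝ × (Fin d → ℝ)) := {p | p.1 = c * Real.sqrt (p.1 ^ 2 + ∑ i, p.2 i ^ 2)} with hS2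
  have hS2m : MeasurableSet S2 := by
    apply (isClosed_eq continuous_fst _).measurableSet
    exact continuous_const.mul (Real.continuous_sqrt.comp
      ((continuous_fst.pow 2).add
        (continuous_finset_sum _ fun i _ => ((continuous_apply i).comp continuous_snd).pow 2)))
  have hpre2 : S1 = π2 ⁻¹' S2 := by
    ext f
    have hsum : ∑ i, f i ^ 2 = f 0 ^ 2 + ∑ i : Fin d, f ((0 : Fin (d + 1)).succAbove i) ^ 2 :=
      Fin.sum_univ_succAbove (fun i => f i ^ 2) 0
    simp only [hS1, hS2, hπ2, Set.mem_setOf_eq, Set.mem_preimage,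
      MeasurableEquiv.piFinSuccAbove_apply]
    rw [hsum]
    rfl
  rw [hpre2, (volume_preserving_piFinSuccAbove (fun _ : Fin (d + 1) => ℝ)
    0).measure_preimage hS2m.nullMeasurableSet]
  have hswap : S2 = Prod.swap ⁻¹'
      {w : (Fin d → ℝ) × ℝ | w.2 = c * Real.sqrt (w.2 ^ 2 + ∑ i, w.1 i ^ 2)} := rfl
  have hS3m : MeasurableSet {w : (Fin d → ℝ) × ℝ |
      w.2 = c * Real.sqrt (w.2 ^ 2 + ∑ i, w.1 i ^ 2)} := by
    apply (isClosed_eq continuous_snd _).measurableSet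
    exact continuous_const.mul (Real.continuous_sqrt.comp
      ((continuous_snd.pow 2).add
        (continuous_finset_sum _ fun i _ => ((continuous_apply i).comp continuous_fst).pow 2)))
  rw [hswap]
  have := (MeasureTheory.Measure.measurePreserving_swap (μ := (volume : Measure ℝ))
    (ν := (volume : Measure (Fin d → ℝ)))).measure_preimage hS3m.nullMeasurableSet
  exact this.trans (volume_pi_slice_zero hd c)


lemma toSphere_univ_ne_zero : (volume : Measure (ESp d)).toSphere Set.univ ≠ 0 := by
  rw [Measure.toSphere_apply_univ]
  refine mul_ne_zero ?_ (measure_ball_pos _ _ one_pos).ne'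
  simp [Module.finrank_pos.ne']

lemma toSphere_univ_ne_top : (volume : Measure (ESp d)).toSphere Set.univ ≠ ⊤ :=
  measure_ne_top _ _

lemma sphMeasure_apply (s : Set (Sph d)) :
    sphMeasure d s = ((volume : Measure (ESp d)).toSphere Set.univ)⁻¹ *
      (volume : Measure (ESp d)).toSphere s := by
  rw [sphMeasure, Measure.smul_apply, smul_eq_mul]

lemma sphMeasure_univ : sphMeasure d Set.univ = 1 := by
  rw [sphMeasure_apply]
  exact ENNReal.inv_mul_cancel toSphere_univ_ne_zero toSphere_univ_ne_top

lemma sphMeasure_le_one (s : Set (Sph d)) : sphMeasure d s ≤ 1 :=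
  sphMeasure_univ (d := d) ▸ measure_mono (Set.subset_univ s)

lemma sphMeasure_ne_top (s : Set (Sph d)) : sphMeasure d s ≠ ⊤ :=
  (lt_of_le_of_lt (sphMeasure_le_one s) ENNReal.one_lt_top).ne

lemma sphMeasure_cap_congr (x : Sph d) (φ : ℝ) :
    sphMeasure d (cap x φ) = sphMeasure d (cap (e0 d) φ) := by
  rw [sphMeasure_apply, sphMeasure_apply, toSphere_cap_eq]

lemma sphMeasure_slice_zero (hd : 1 ≤ d) (c : ℝ) :
    sphMeasure d {y : Sph d | ⟪(e0 d : ESp d), (y : ESp d)⟫_ℝ = c} = 0 := by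
  rw [sphMeasure_apply]
  have hm : MeasurableSet {y : Sph d | ⟪(e0 d : ESp d), (y : ESp d)⟫_ℝ = c} :=
    (isClosed_eq (Continuous.inner continuous_const continuous_subtype_val)
      continuous_const).measurableSet
  have hts : (volume : Measure (ESp d)).toSphere
      {y : Sph d | ⟪(e0 d : ESp d), (y : ESp d)⟫_ℝ = c} = 0 := by
    rw [Measure.toSphere_apply' _ hm]
    have hsub : (Set.Ioo (0:ℝ) 1 •
        ((↑) '' {y : Sph d | ⟪(e0 d : ESp d), (y : ESp d)⟫_ℝ = c} : Set (ESp d))) ⊆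
        {z : ESp d | ⟪(e0 d : ESp d), z⟫_ℝ = c * ‖z‖} := by
      rintro z hz
      rw [Set.mem_smul] at hz
      obtain ⟨r, hr, w, ⟨y, hy, rfl⟩, rfl⟩ := hz
      have h1 : ⟪(e0 d : ESp d), r • (y : ESp d)⟫_ℝ = r * c := by
        rw [real_inner_smul_right, hy]
      have h2 : ‖r • (y : ESp d)‖ = r := by
        rw [norm_smul, (mem_sphere_zero_iff_norm).1 y.2, mul_one, Real.norm_eq_abs,
          abs_of_pos hr.1]
      simp only [Set.mem_setOf_eq, h1, h2]
      ring
    rw [measure_mono_null hsub (volume_cone_zero hd c), mul_zero]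
  rw [hts, mul_zero]

lemma sphMeasure_geo_sphere_zero (hd : 1 ≤ d) (W : ℝ) :
    sphMeasure d {y : Sph d | geoDist (e0 d) y = W} = 0 := by
  refine measure_mono_null ?_ (sphMeasure_slice_zero hd (Real.cos W))
  intro y hy
  have h1 : |⟪(e0 d : ESp d), (y : ESp d)⟫_ℝ| ≤ 1 := by
    have := abs_real_inner_le_norm (e0 d : ESp d) (y : ESp d)
    rwa [(mem_sphere_zero_iff_norm).1 (e0 d).2, (mem_sphere_zero_iff_norm).1 y.2,
      one_mul] at this
  have h2 := abs_le.1 h1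
  show ⟪(e0 d : ESp d), (y : ESp d)⟫_ℝ = Real.cos W
  rw [← hy]
  exact (Real.cos_arccos h2.1 h2.2).symm

lemma capVol_eq (φ : ℝ) : capVol d φ = (sphMeasure d (cap (e0 d) φ)).toReal := rfl

lemma cover_at_covRad {n : ℕ} (hd : 1 ≤ d) (hn : 1 ≤ n) :
    0 < covRad d n ∧ covRad d n ≤ π ∧
      ∃ x : Fin n → Sph d, (⋃ i, cap (x i) (covRad d n)) = Set.univ := by
  classical
  set Φ : Set ℝ := {φ : ℝ | 0 < φ ∧ ∃ x : Fin n → Sph d, (⋃ i, cap (x i) φ) = Set.univ}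
    with hΦ
  have hπΦ : π ∈ Φ := by
    refine ⟨Real.pi_pos, fun _ => e0 d, ?_⟩
    ext y; simp only [Set.mem_iUnion, Set.mem_univ, iff_true]
    exact ⟨⟨0, hn⟩, Real.arccos_le_pi _⟩
  have hbdd : BddBelow Φ := ⟨0, fun φ hφ => hφ.1.le⟩
  have hW : covRad d n = sInf Φ := rfl
  have hW0 : 0 ≤ covRad d n := hW ▸ le_csInf ⟨π, hπΦ⟩ fun φ hφ => hφ.1.le
  have hWπ : covRad d n ≤ π := hW ▸ csInf_le hbdd hπΦ
  have hmem : ∀ k : ℕ, ∃ x : Fin n → Sph d,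
      (⋃ i, cap (x i) (covRad d n + 1 / (k + 1))) = Set.univ := by
    intro k
    have hpos : (0:ℝ) < 1 / ((k:ℝ) + 1) := by positivity
    have hlt : sInf Φ < covRad d n + 1 / ((k:ℝ) + 1) := by
      rw [← hW]; linarith
    obtain ⟨φ, hφΦ, hφlt⟩ := (csInf_lt_iff hbdd ⟨π, hπΦ⟩).1 hlt
    obtain ⟨x, hx⟩ := hφΦ.2
    refine ⟨x, Set.eq_univ_of_univ_subset ?_⟩
    rw [← hx]
    exact Set.iUnion_mono fun i => cap_mono _ hφlt.le
  choose xs hxs using hmem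
  obtain ⟨xstar, -, ψ, hψmono, hψtend⟩ :=
    (isCompact_univ (X := Fin n → Sph d)).tendsto_subseq (fun k => Set.mem_univ (xs k))
  have hcov : (⋃ i, cap (xstar i) (covRad d n)) = Set.univ := by
    ext y; simp only [Set.mem_iUnion, Set.mem_univ, iff_true]
    by_contra hcon
    push_neg at hcon
    have hgt : ∀ i, covRad d n < geoDist (xstar i) y :=
      fun i => lt_of_not_ge fun h => hcon i h
    obtain ⟨i₀, -, hi₀⟩ := Finset.exists_min_image Finset.univ
      (fun i => geoDist (xstar i) y) ⟨⟨0, hn⟩, Finset.mem_univ _⟩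
    set ε := geoDist (xstar i₀) y - covRad d n with hε
    have hε0 : 0 < ε := sub_pos.2 (hgt i₀)
    have hcontg : Continuous fun z : Sph d => geoDist z y :=
      Real.continuous_arccos.comp
        (Continuous.inner continuous_subtype_val continuous_const)
    have htend : ∀ i, Tendsto (fun k => geoDist (xs (ψ k) i) y) atTop
        (𝓝 (geoDist (xstar i) y)) := by
      intro i
      have h1 : Tendsto (fun k => xs (ψ k) i) atTop (𝓝 (xstar i)) :=
        tendsto_pi_nhds.1 hψtend i
      exact (hcontg.tendsto (xstar i)).comp h1
    have hev1 : ∀ᶠ k in atTop, ∀ i, covRad d n + ε / 2 < geoDist (xs (ψ k) i) y := by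
      rw [Filter.eventually_all]
      intro i
      have hlt : covRad d n + ε / 2 < geoDist (xstar i) y := by
        have := hi₀ i (Finset.mem_univ i)
        simp only [hε] at *
        linarith
      exact (htend i) (Ioi_mem_nhds hlt)
    have hev2 : ∀ᶠ k in atTop, 1 / ((ψ k : ℝ) + 1) < ε / 2 := by
      obtain ⟨K, hK⟩ := exists_nat_gt (2 / ε)
      rw [Filter.eventually_atTop]
      refine ⟨K, fun k hk => ?_⟩
      have hψk : (k : ℝ) ≤ (ψ k : ℝ) := by exact_mod_cast hψmono.le_apply
      have hKk : (K : ℝ) ≤ (k : ℝ) := by exact_mod_cast hk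
      have h2 : 2 / ε < (ψ k : ℝ) + 1 := by linarith
      have hm : 2 < ε * ((ψ k : ℝ) + 1) := by
        rw [div_lt_iff₀ hε0] at h2; linarith
      rw [div_lt_iff₀ (by positivity)]
      nlinarith
    obtain ⟨k, hk1, hk2⟩ := (hev1.and hev2).exists
    have hy : y ∈ ⋃ i, cap (xs (ψ k) i) (covRad d n + 1 / ((ψ k : ℝ) + 1)) := by
      rw [hxs (ψ k)]; exact Set.mem_univ y
    rw [Set.mem_iUnion] at hy
    obtain ⟨i, hi⟩ := hy
    have : geoDist (xs (ψ k) i) y ≤ covRad d n + 1 / ((ψ k : ℝ) + 1) := hi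
    have := hk1 i
    linarith
  have hWpos : 0 < covRad d n := by
    rcases hW0.lt_or_eq with h | h
    · exact h
    · exfalso
      rw [← h] at hcov
      have h1 : sphMeasure d Set.univ ≤ ∑ i : Fin n, sphMeasure d (cap (xstar i) 0) := by
        rw [← hcov]
        exact measure_iUnion_fintype_le _ _
      have h2 : ∀ i : Fin n, sphMeasure d (cap (xstar i) 0) = 0 := by
        intro i
        rw [sphMeasure_cap_congr]
        refine measure_mono_null ?_ (sphMeasure_geo_sphere_zero hd 0)
        intro y hy
        exact le_antisymm hy (Real.arccos_nonneg _)
      rw [sphMeasure_univ, Finset.sum_congr rfl (fun i _ => h2 i), Finset.sum_const_zero] at h1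
      simp at h1
  exact ⟨hWpos, hWπ, xstar, hcov⟩

lemma capVol_left_cont (hd : 1 ≤ d) {W : ℝ} (hW : 0 < W) :
    sphMeasure d (cap (e0 d) W) =
      ⨆ k : ℕ, sphMeasure d (cap (e0 d) (W - W / ((k : ℝ) + 2))) := by
  have hmono : Monotone fun k : ℕ => cap (e0 d) (W - W / ((k : ℝ) + 2)) := by
    intro a b hab
    apply cap_mono
    have hab' : (a : ℝ) + 2 ≤ (b : ℝ) + 2 := by
      have : (a : ℝ) ≤ (b : ℝ) := by exact_mod_cast hab
      linarith
    have hd2 : W / ((b : ℝ) + 2) ≤ W / ((a : ℝ) + 2) :=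
      div_le_div_of_nonneg_left hW.le (by positivity) hab' 
    linarith
  have hunion : {y : Sph d | geoDist (e0 d) y < W} =
      ⋃ k : ℕ, cap (e0 d) (W - W / ((k : ℝ) + 2)) := by
    ext y
    simp only [Set.mem_setOf_eq, Set.mem_iUnion]
    constructor
    · intro h
      obtain ⟨k, hk⟩ := exists_nat_gt (W / (W - geoDist (e0 d) y))
      refine ⟨k, ?_⟩
      show geoDist (e0 d) y ≤ W - W / ((k : ℝ) + 2)
      have hpos : 0 < W - geoDist (e0 d) y := sub_pos.2 h
      have hk' : W < (k : ℝ) * (W - geoDist (e0 d) y) := (div_lt_iff₀ hpos).1 hk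
      have h1 : W / ((k : ℝ) + 2) ≤ W - geoDist (e0 d) y := by
        rw [div_le_iff₀ (by positivity)]
        nlinarith
      linarith
    · rintro ⟨k, hk⟩
      have h2 : 0 < W / ((k : ℝ) + 2) := by positivity
      have : geoDist (e0 d) y ≤ W - W / ((k : ℝ) + 2) := hk
      linarith
  have h0 : sphMeasure d (cap (e0 d) W) = sphMeasure d {y | geoDist (e0 d) y < W} := by
    apply le_antisymm
    · have hsplit : cap (e0 d) W ⊆
          {y | geoDist (e0 d) y < W} ∪ {y | geoDist (e0 d) y = W} := by
        intro y hy
        have hy' : geoDist (e0 d) y ≤ W := hy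
        rcases lt_or_eq_of_le hy' with h | h
        · exact Or.inl h
        · exact Or.inr h
      calc sphMeasure d (cap (e0 d) W) ≤ _ := measure_mono hsplit
        _ ≤ sphMeasure d {y | geoDist (e0 d) y < W} +
            sphMeasure d {y | geoDist (e0 d) y = W} := measure_union_le _ _
        _ = sphMeasure d {y | geoDist (e0 d) y < W} := by
            rw [sphMeasure_geo_sphere_zero hd W, add_zero]
    · exact measure_mono fun y hy => show geoDist (e0 d) y ≤ W from le_of_lt hy
  rw [h0, hunion, hmono.directed_le.measure_iUnion]

lemma main (d n : ℕ) (hd : 1 ≤ d) (hn : 1 ≤ n) :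
    (n : ℝ) * minCapDisp d n = minDens d n ∧
    minDens d n = (n : ℝ) * capVol d (covRad d n) := by
  obtain ⟨hW0, hWπ, xc, hxc⟩ := cover_at_covRad (n := n) hd hn
  set W := covRad d n with hWdef
  have Vnonneg : ∀ φ : ℝ, 0 ≤ capVol d φ := fun φ => ENNReal.toReal_nonneg
  have Vmono : ∀ {φ ψ : ℝ}, φ ≤ ψ → capVol d φ ≤ capVol d ψ := fun h =>
    ENNReal.toReal_mono (sphMeasure_ne_top _) (measure_mono (cap_mono _ h))
  have hcapvol : ∀ (x : Sph d) (φ : ℝ), (sphMeasure d (cap x φ)).toReal = capVol d φ := by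
    intro x φ; rw [capVol_eq, sphMeasure_cap_congr]
  set Φ : Set ℝ := {φ : ℝ | 0 < φ ∧ ∃ x : Fin n → Sph d, (⋃ i, cap (x i) φ) = Set.univ}
    with hΦ
  have hbddΦ : BddBelow Φ := ⟨0, fun φ hφ => hφ.1.le⟩
  have hWle : ∀ φ ∈ Φ, W ≤ φ := fun φ hφ => csInf_le hbddΦ hφ
  have hsum : ∀ (x : Fin n → Sph d) (φ : ℝ),
      ∑ i : Fin n, (sphMeasure d (cap (x i) φ)).toReal = n * capVol d φ := by
    intro x φ
    rw [Finset.sum_congr rfl fun i _ => hcapvol (x i) φ, Finset.sum_const,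
      Finset.card_univ, Fintype.card_fin, nsmul_eq_mul]
  have hMdef : minDens d n = sInf {s : ℝ | ∃ φ ∈ Set.Ioc (0 : ℝ) π, ∃ x : Fin n → Sph d,
      (⋃ i, cap (x i) φ) = Set.univ ∧
      s = ∑ i : Fin n, (sphMeasure d (cap (x i) φ)).toReal} := rfl
  have hMmem : (n : ℝ) * capVol d W ∈ {s : ℝ | ∃ φ ∈ Set.Ioc (0 : ℝ) π, ∃ x : Fin n → Sph d,
      (⋃ i, cap (x i) φ) = Set.univ ∧
      s = ∑ i : Fin n, (sphMeasure d (cap (x i) φ)).toReal} :=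
    ⟨W, ⟨hW0, hWπ⟩, xc, hxc, (hsum xc W).symm⟩
  have hMlb : ∀ s ∈ {s : ℝ | ∃ φ ∈ Set.Ioc (0 : ℝ) π, ∃ x : Fin n → Sph d,
      (⋃ i, cap (x i) φ) = Set.univ ∧
      s = ∑ i : Fin n, (sphMeasure d (cap (x i) φ)).toReal},
      (n : ℝ) * capVol d W ≤ s := by
    rintro s ⟨φ, hφ, x, hx, rfl⟩
    rw [hsum]
    have hWφ : W ≤ φ := hWle φ ⟨hφ.1, x, hx⟩
    exact mul_le_mul_of_nonneg_left (Vmono hWφ) (Nat.cast_nonneg n)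
  have hdens : minDens d n = (n : ℝ) * capVol d W := by
    rw [hMdef]
    exact le_antisymm (csInf_le ⟨_, hMlb⟩ hMmem) (le_csInf ⟨_, hMmem⟩ hMlb)
  have hcapDisp_nonneg : ∀ P : Set (Sph d), 0 ≤ capDisp P := by
    intro P
    apply Real.sSup_nonneg
    rintro v ⟨x, φ, hφ, hint, rfl⟩
    exact ENNReal.toReal_nonneg
  have hDbdd : BddBelow {v : ℝ | ∃ x : Fin n → Sph d, v = capDisp (Set.range x)} :=
    ⟨0, by rintro v ⟨x, rfl⟩; exact hcapDisp_nonneg _⟩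
  have hDne : Set.Nonempty {v : ℝ | ∃ x : Fin n → Sph d, v = capDisp (Set.range x)} :=
    ⟨capDisp (Set.range xc), xc, rfl⟩
  have hub : capDisp (Set.range xc) ≤ capVol d W := by
    apply Real.sSup_le _ (Vnonneg W)
    rintro v ⟨y, φ, hφIcc, hint, rfl⟩
    have hy : y ∈ ⋃ i, cap (xc i) W := by rw [hxc]; trivial
    rw [Set.mem_iUnion] at hy
    obtain ⟨i, hi⟩ := hy
    have hnotin : xc i ∉ cap y φ := by
      intro hmem
      have hin : xc i ∈ cap y φ ∩ Set.range xc := ⟨hmem, Set.mem_range_self i⟩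
      rw [hint] at hin
      exact hin
    have hφW : φ ≤ W := by
      have h1 : ¬ geoDist y (xc i) ≤ φ := hnotin
      have h2 : geoDist y (xc i) ≤ W := mem_cap_comm.1 hi
      linarith [lt_of_not_ge h1]
    rw [hcapvol]
    exact Vmono hφW
  have hlow : ∀ x : Fin n → Sph d, capVol d W ≤ capDisp (Set.range x) := by
    intro x
    have hstep : ∀ ψ : ℝ, 0 < ψ → ψ < W → capVol d ψ ≤ capDisp (Set.range x) := by
      intro ψ h0ψ hψW
      have hex : ∃ y : Sph d, cap y ψ ∩ Set.range x = ∅ := by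
        by_contra hcon
        push_neg at hcon
        have hcover : (⋃ i, cap (x i) ψ) = Set.univ := by
          ext y
          simp only [Set.mem_iUnion, Set.mem_univ, iff_true]
          obtain ⟨z, hz1, i, rfl⟩ := hcon y
          exact ⟨i, mem_cap_comm.1 hz1⟩
        have hle : W ≤ ψ := hWle ψ ⟨h0ψ, x, hcover⟩
        linarith
      obtain ⟨y, hy⟩ := hex
      have hmemv : capVol d ψ ∈ {v : ℝ | ∃ x' : Sph d, ∃ φ ∈ Set.Icc (0 : ℝ) π,
          cap x' φ ∩ Set.range x = ∅ ∧ v = (sphMeasure d (cap x' φ)).toReal} :=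
        ⟨y, ψ, ⟨h0ψ.le, le_trans hψW.le hWπ⟩, hy, (hcapvol y ψ).symm⟩
      apply le_csSup _ hmemv
      refine ⟨1, ?_⟩
      rintro v ⟨x', φ, hφ, hint, rfl⟩
      have h1 := ENNReal.toReal_mono ENNReal.one_ne_top (sphMeasure_le_one (cap x' φ))
      simpa using h1
    have hse := capVol_left_cont (d := d) hd hW0
    have hkey : ∀ k : ℕ, sphMeasure d (cap (e0 d) (W - W / ((k : ℝ) + 2))) ≤
        ENNReal.ofReal (capDisp (Set.range x)) := by
      intro k
      have h1 : W / ((k : ℝ) + 2) < W := by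
        rw [div_lt_iff₀ (by positivity)]
        nlinarith
      have h0ψ : 0 < W - W / ((k : ℝ) + 2) := by linarith
      have h2 : 0 < W / ((k : ℝ) + 2) := by positivity
      have hψW : W - W / ((k : ℝ) + 2) < W := by linarith
      have h3 := hstep _ h0ψ hψW
      calc sphMeasure d (cap (e0 d) (W - W / ((k : ℝ) + 2)))
          = ENNReal.ofReal (capVol d (W - W / ((k : ℝ) + 2))) := by
            rw [capVol_eq, ENNReal.ofReal_toReal (sphMeasure_ne_top _)]
        _ ≤ ENNReal.ofReal (capDisp (Set.range x)) := ENNReal.ofReal_le_ofReal h3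
    have hle : sphMeasure d (cap (e0 d) W) ≤ ENNReal.ofReal (capDisp (Set.range x)) := by
      rw [hse]; exact iSup_le hkey
    have h4 := ENNReal.toReal_le_of_le_ofReal (hcapDisp_nonneg _) hle
    rwa [← capVol_eq] at h4
  have hdisp : minCapDisp d n = capVol d W := by
    apply le_antisymm
    · exact le_trans (csInf_le hDbdd ⟨xc, rfl⟩) hub
    · exact le_csInf hDne (by rintro v ⟨x, rfl⟩; exact hlow x)
  exact ⟨by rw [hdisp, hdens], by rw [hdens]⟩

end SphAux

/-- For all positive integers `d` and `n`,
`n·disp_C(n,d) = dens(n,d) = n·V(φ(n))`. -/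
theorem disp_eq_dens_eq_vol_covRad (d n : ℕ) (hd : 1 ≤ d) (hn : 1 ≤ n) :
    (n : ℝ) * minCapDisp d n = minDens d n ∧
    minDens d n = (n : ℝ) * capVol d (covRad d n) :=
  SphAux.main d n hd hn
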